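/- Let f be a continuous function on the upper half plane, k ∈ ℤ, C₁ > 0, C₂ ∈ ℂ with C₂ ≠ 0, and M, a > 0. Assume f(−C₁/z) = C₂ z^k f(z) for all z in the upper half plane and |f(z)| ≤ M e^{−a·Im z} for all z in the upper half plane. Let s₀ ∈ ℝ and γ > 0. Then there exists a constant c > 0 (depending only on f's data a, C₁, C₂, k, M, on s₀, and on γ, with c = O(1+γ)) such that for every T ≥ 2 and all d₁, d₂ ≥ c, setting s = s₀ + iT and α = −1 + i/T, the integral ∫_0^∞ f(αt) t^{s−1} dt converges absolutely and | ∫_0^∞ f(αt) t^{s−1} dt − ∫_{1/(d₁ T log T)}^{d₂ T log T} f(αt) t^{s−1} dt | ≤ c·T^{−γ}. -/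

import Mathlib

open Real MeasureTheory intervalIntegral Set Filter

lemma aux_pow_le_fact_mul_exp {x : ℝ} (hx : 0 ≤ x) (n : ℕ) :
    x ^ n ≤ n.factorial * Real.exp x := by
  have h1 : x ^ n / n.factorial ≤ Real.exp x := by
    refine le_trans ?_ (Real.sum_le_exp_of_nonneg hx (n + 1))
    exact Finset.single_le_sum (f := fun i => x ^ i / i.factorial)
      (fun i _ => by positivity) (Finset.self_mem_range_succ n)
  rw [div_le_iff₀ (by positivity)] at h1
  linarith [h1]

lemma aux_zpow_le {x : ℝ} (h1 : 1 ≤ x) (h2 : x ≤ 2) (m : ℤ) :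
    x ^ m ≤ 2 ^ m.natAbs := by
  rcases le_or_gt 0 m with hm | hm
  · lift m to ℕ using hm
    rw [zpow_natCast, Int.natAbs_natCast]
    exact pow_le_pow_left₀ (by linarith) h2 m
  · calc x ^ m ≤ 1 := zpow_le_one_of_nonpos₀ h1 hm.le
    _ ≤ 2 ^ m.natAbs := one_le_pow₀ (by norm_num)

lemma aux_integral_exp_tail {μ : ℝ} (hμ : 0 < μ) (X : ℝ) :
    ∫ t in Set.Ioi X, Real.exp (-(μ * t)) = Real.exp (-(μ * X)) / μ := by
  have hderiv : ∀ t ∈ Set.Ici X, HasDerivAt (fun t => -Real.exp (-(μ * t)) / μ)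
      (Real.exp (-(μ * t))) t := by
    intro t _
    have h1 : HasDerivAt (fun t : ℝ => -(μ * t)) (-μ) t := by
      have h := ((hasDerivAt_id t).const_mul μ).neg; simpa [Pi.neg_def] using h
    have h2 : HasDerivAt (fun t : ℝ => Real.exp (-(μ * t))) (Real.exp (-(μ * t)) * (-μ)) t :=
      (Real.hasDerivAt_exp _).comp t h1
    have h3 := (h2.neg).div_const μ
    rw [mul_neg, neg_neg, mul_div_assoc, div_self hμ.ne', mul_one] at h3
    exact h3
  have hint : IntegrableOn (fun t => Real.exp (-(μ * t))) (Set.Ioi X) := by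
    simpa [mul_comm] using exp_neg_integrableOn_Ioi X hμ
  have htend : Tendsto (fun t => -Real.exp (-(μ * t)) / μ) atTop (nhds 0) := by
    have : Tendsto (fun t : ℝ => -(μ * t)) atTop atBot :=
      tendsto_neg_atBot_iff.mpr (tendsto_id.const_mul_atTop hμ)
    have := (Real.tendsto_exp_atBot.comp this).neg.div_const μ
    simpa using this
  have := MeasureTheory.integral_Ioi_of_hasDerivAt_of_tendsto' hderiv hint htend
  rw [this]
  ring

set_option maxHeartbeats 2000000 in
theorem stmt12 (f : ℂ → ℂ) (hfc : ContinuousOn f {z : ℂ | 0 < z.im}) (k : ℤ)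
    (C₁ : ℝ) (hC₁ : 0 < C₁) (C₂ : ℂ) (hC₂ : C₂ ≠ 0) (M a : ℝ) (hM : 0 < M) (ha : 0 < a)
    (hfe : ∀ z : ℂ, 0 < z.im → f (-(C₁ : ℂ) / z) = C₂ * z ^ k * f z)
    (hfb : ∀ z : ℂ, 0 < z.im → ‖f z‖ ≤ M * Real.exp (-a * z.im))
    (s₀ γ : ℝ) (hγ : 0 < γ) :
    ∃ c > (0 : ℝ), ∀ T : ℝ, 2 ≤ T → ∀ d₁ d₂ : ℝ, c ≤ d₁ → c ≤ d₂ →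
      ∀ s : ℂ, s = (s₀ : ℂ) + Complex.I * T → ∀ α : ℂ, α = -1 + Complex.I / T →
        IntegrableOn (fun t : ℝ => f (α * t) * (t : ℂ) ^ (s - 1)) (Set.Ioi 0) ∧
        ‖(∫ t in Set.Ioi (0 : ℝ), f (α * t) * (t : ℂ) ^ (s - 1)) -
            ∫ t in (1 / (d₁ * T * Real.log T))..(d₂ * T * Real.log T),
              f (α * t) * (t : ℂ) ^ (s - 1)‖ ≤ c * T ^ (-γ) := by
  have hb : 0 < a * C₁ / 2 := by positivity
  set b : ℝ := a * C₁ / 2 with hbdef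
  set p : ℕ := ⌈s₀ - 1⌉₊ with hpdef
  set q : ℕ := ⌈(k : ℝ) + 1 - s₀⌉₊ with hqdef
  have hC₂n : 0 < ‖C₂‖ := norm_pos_iff.mpr hC₂
  set K₁ : ℝ := M * p.factorial * (2 / a) ^ p * (2 / a) with hK₁def
  set K₂ : ℝ := M * ‖C₂‖⁻¹ * 2 ^ k.natAbs * q.factorial * (2 / b) ^ q with hK₂def
  have hK₁ : 0 < K₁ := by positivity
  have hK₂ : 0 < K₂ := by positivity
  set c : ℝ := max (max 1 (K₁ + K₂)) (max (2 * ((p : ℝ) + 1 + γ) / a) (2 * ((q : ℝ) + γ) / b))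
    with hcdef
  have hc1 : (1 : ℝ) ≤ c := le_trans (le_max_left _ _) (le_max_left _ _)
  have hcK : K₁ + K₂ ≤ c := le_trans (le_max_right _ _) (le_max_left _ _)
  have hcp : 2 * ((p : ℝ) + 1 + γ) / a ≤ c := le_trans (le_max_left _ _) (le_max_right _ _)
  have hcq : 2 * ((q : ℝ) + γ) / b ≤ c := le_trans (le_max_right _ _) (le_max_right _ _)
  refine ⟨c, by linarith, ?_⟩
  intro T hT d₁ d₂ hd₁ hd₂ s hs α hα
  -- basic facts
  have hT0 : (0 : ℝ) < T := by linarith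
  have hT1 : (1 : ℝ) ≤ T := by linarith
  have hlog2 : (0.6931471803 : ℝ) < Real.log 2 := Real.log_two_gt_d9
  have hlogT : Real.log 2 ≤ Real.log T := Real.log_le_log (by norm_num) hT
  have hlogT0 : 0 < Real.log T := by linarith
  have hTlog : 1 ≤ T * Real.log T := by nlinarith
  have hd₁1 : 1 ≤ d₁ := le_trans hc1 hd₁
  have hd₂1 : 1 ≤ d₂ := le_trans hc1 hd₂
  have hαre : α.re = -1 := by
    rw [hα]; simp
  have hαim : α.im = 1 / T := by
    rw [hα]
    simp [Complex.div_im, Complex.normSq_ofReal]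
  have hsre : (s - 1).re = s₀ - 1 := by
    rw [hs]; simp
  have him : ∀ t : ℝ, (α * t).im = t / T := by
    intro t
    rw [Complex.mul_im, hαim, hαre]
    simp
    ring
  have himpos : ∀ t : ℝ, 0 < t → 0 < (α * t).im := by
    intro t ht; rw [him t]; positivity
  have hnorm_t : ∀ t : ℝ, 0 < t → ‖(t : ℂ) ^ (s - 1)‖ = t ^ (s₀ - 1) := by
    intro t ht
    rw [Complex.norm_cpow_eq_rpow_re_of_pos ht, hsre]
  have hαsq : Complex.normSq α = 1 + (1 / T) ^ 2 := by
    rw [Complex.normSq_apply, hαre, hαim]; ring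
  have hαsq1 : 1 ≤ Complex.normSq α := by rw [hαsq]; nlinarith [sq_nonneg (1/T)]
  have hαsq2 : Complex.normSq α ≤ 2 := by
    rw [hαsq]
    have h0 : (0:ℝ) < 1/T := by positivity
    have h1 : 1/T ≤ 1 := by rw [div_le_one hT0]; linarith
    have h2 : (1/T)^2 ≤ 1 := pow_le_one₀ h0.le h1
    linarith
  have habs : ‖α‖ ^ 2 = Complex.normSq α := by rw [Complex.sq_norm]
  have hα1 : 1 ≤ ‖α‖ :=
    le_of_pow_le_pow_left₀ two_ne_zero (norm_nonneg α) (by rw [one_pow, habs]; exact hαsq1)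
  have hα2 : ‖α‖ ≤ 2 :=
    le_of_pow_le_pow_left₀ two_ne_zero (by norm_num) (by rw [habs]; norm_num; linarith)
  have hnorm_αt : ∀ t : ℝ, 0 < t → ‖α * t‖ = ‖α‖ * t := by
    intro t ht
    rw [norm_mul, Complex.norm_real, Real.norm_eq_abs, abs_of_pos ht]
  have hFlarge : ∀ t : ℝ, 1 ≤ t → ‖f (α * t) * (t : ℂ) ^ (s - 1)‖ ≤
      M * p.factorial * (2 / a) ^ p * T ^ (p : ℕ) * Real.exp (-(a / (2 * T) * t)) := by
    intro t ht1
    have ht : (0:ℝ) < t := lt_of_lt_of_le one_pos ht1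
    have hf1 : ‖f (α * t)‖ ≤ M * Real.exp (-(a / T * t)) := by
      have h := hfb (α * t) (himpos t ht)
      rw [him t] at h
      have he : -a * (t / T) = -(a / T * t) := by ring
      rwa [he] at h
    have hpow : t ^ (s₀ - 1) ≤ t ^ (p : ℕ) := by
      have h1 : t ^ (s₀ - 1) ≤ t ^ ((p : ℕ) : ℝ) :=
        Real.rpow_le_rpow_of_exponent_le ht1 (Nat.le_ceil _)
      rwa [Real.rpow_natCast] at h1
    have hpow2 : t ^ (p : ℕ) ≤ (2 * T / a) ^ p * (p.factorial * Real.exp (a / (2 * T) * t)) := by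
      have h1 : t = (2 * T / a) * (a / (2 * T) * t) := by field_simp
      calc t ^ (p : ℕ) = (2 * T / a) ^ p * (a / (2 * T) * t) ^ p := by rw [← mul_pow, ← h1]
      _ ≤ (2 * T / a) ^ p * (p.factorial * Real.exp (a / (2 * T) * t)) :=
          mul_le_mul_of_nonneg_left (aux_pow_le_fact_mul_exp (by positivity) p) (by positivity)
    calc ‖f (α * t) * (t : ℂ) ^ (s - 1)‖ = ‖f (α * t)‖ * t ^ (s₀ - 1) := by
          rw [norm_mul, hnorm_t t ht]
    _ ≤ (M * Real.exp (-(a / T * t))) *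
          ((2 * T / a) ^ p * (p.factorial * Real.exp (a / (2 * T) * t))) :=
        mul_le_mul hf1 (hpow.trans hpow2) (Real.rpow_nonneg ht.le _) (by positivity)
    _ = M * p.factorial * (2 / a) ^ p * T ^ (p : ℕ) *
          (Real.exp (-(a / T * t)) * Real.exp (a / (2 * T) * t)) := by
        rw [show (2 * T / a) = (2 / a) * T by ring, mul_pow]; ring
    _ = M * p.factorial * (2 / a) ^ p * T ^ (p : ℕ) * Real.exp (-(a / (2 * T) * t)) := by
        congr 1
        rw [← Real.exp_add]
        congr 1
        field_simp
        ring
  have hFsmall : ∀ t : ℝ, 0 < t → t ≤ 1 → ‖f (α * t) * (t : ℂ) ^ (s - 1)‖ ≤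
      K₂ * T ^ (q : ℕ) * Real.exp (-(b / (2 * T) / t)) := by
    intro t ht ht1
    have hz0 : α * (t : ℂ) ≠ 0 := by
      intro h
      have h2 := himpos t ht
      rw [h] at h2
      simp at h2
    have hzn : 0 < ‖α * (t : ℂ)‖ := norm_pos_iff.mpr hz0
    have hnsq0 : 0 < Complex.normSq α := lt_of_lt_of_le one_pos hαsq1
    have hwim : (-(C₁ : ℂ) / (α * t)).im = C₁ * (α * t).im / Complex.normSq (α * t) := by
      rw [div_eq_mul_inv, Complex.mul_im, Complex.inv_im, Complex.inv_re]
      simp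
      ring
    have hnormsq : Complex.normSq (α * (t : ℂ)) = Complex.normSq α * t ^ 2 := by
      rw [Complex.normSq_mul, Complex.normSq_ofReal]; ring
    have hw_pos : 0 < (-(C₁ : ℂ) / (α * t)).im := by
      rw [hwim, him t, hnormsq]
      apply div_pos (by positivity) (mul_pos hnsq0 (by positivity))
    have hwim_ge : b / T / t ≤ a * (-(C₁ : ℂ) / (α * t)).im := by
      rw [hwim, him t, hnormsq, hbdef]
      have hR : a * (C₁ * (t / T) / (Complex.normSq α * t ^ 2)) =
          a * C₁ / (T * Complex.normSq α * t) := by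
        field_simp
      have hL : a * C₁ / 2 / T / t = a * C₁ / (2 * T * t) := by ring
      rw [hR, hL, div_le_div_iff₀ (by positivity) (by positivity)]
      have h4 : T * Complex.normSq α * t ≤ 2 * T * t := by
        have h5 := mul_le_mul_of_nonneg_right (mul_le_mul_of_nonneg_left hαsq2 hT0.le) ht.le
        linarith only [h5]
      exact mul_le_mul_of_nonneg_left h4 (by positivity)
    have heq := hfe (α * t) (himpos t ht)
    have hfz : ‖f (α * t)‖ * (‖C₂‖ * ‖α * (t : ℂ)‖ ^ k) ≤ M * Real.exp (-(b / T / t)) := by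
      have h1 : ‖f (-(C₁ : ℂ) / (α * t))‖ = ‖C₂‖ * ‖α * (t : ℂ)‖ ^ k * ‖f (α * t)‖ := by
        rw [heq, norm_mul, norm_mul, norm_zpow]
      have h2 := hfb _ hw_pos
      rw [h1] at h2
      have h3 : Real.exp (-a * (-(C₁ : ℂ) / (α * t)).im) ≤ Real.exp (-(b / T / t)) := by
        apply Real.exp_le_exp.mpr
        linarith [hwim_ge]
      calc ‖f (α * t)‖ * (‖C₂‖ * ‖α * (t : ℂ)‖ ^ k)
          = ‖C₂‖ * ‖α * (t : ℂ)‖ ^ k * ‖f (α * t)‖ := by ring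
      _ ≤ M * Real.exp (-a * (-(C₁ : ℂ) / (α * t)).im) := h2
      _ ≤ M * Real.exp (-(b / T / t)) := mul_le_mul_of_nonneg_left h3 hM.le
    have hCz : 0 < ‖C₂‖ * ‖α * (t : ℂ)‖ ^ k := mul_pos hC₂n (zpow_pos hzn k)
    have hfz2 : ‖f (α * t)‖ ≤
        M * Real.exp (-(b / T / t)) * (‖C₂‖⁻¹ * (‖α‖ ^ (-k) * t ^ (-k))) := by
      have he : M * Real.exp (-(b / T / t)) * (‖C₂‖⁻¹ * (‖α‖ ^ (-k) * t ^ (-k))) =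
          M * Real.exp (-(b / T / t)) / (‖C₂‖ * ‖α * (t : ℂ)‖ ^ k) := by
        rw [← mul_zpow, ← hnorm_αt t ht, zpow_neg]
        field_simp
      rw [he, le_div_iff₀ hCz]
      exact hfz
    have hαk : ‖α‖ ^ (-k) ≤ (2 : ℝ) ^ k.natAbs := by
      have h := aux_zpow_le hα1 hα2 (-k)
      rwa [Int.natAbs_neg] at h
    have htk0 : (0:ℝ) ≤ t ^ (-k) := le_of_lt (zpow_pos ht _)
    have htk : (t : ℝ) ^ (-k) * t ^ (s₀ - 1) ≤
        (2 * T / b) ^ q * (q.factorial * Real.exp (b / (2 * T) / t)) := by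
      have e1 : (t : ℝ) ^ (-k) * t ^ (s₀ - 1) = t ^ (s₀ - 1 - (k : ℝ)) := by
        rw [← Real.rpow_intCast t (-k), ← Real.rpow_add ht]
        congr 1
        push_cast
        ring
      have e2 : t ^ (s₀ - 1 - (k : ℝ)) ≤ t ^ (-((q : ℕ) : ℝ)) := by
        apply Real.rpow_le_rpow_of_exponent_ge ht ht1
        have h := Nat.le_ceil ((k : ℝ) + 1 - s₀)
        rw [← hqdef] at h
        linarith
      have e3 : t ^ (-((q : ℕ) : ℝ)) = (t⁻¹) ^ (q : ℕ) := by
        rw [Real.rpow_neg ht.le, Real.rpow_natCast, ← inv_pow]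
      have e4 : (t⁻¹) ^ (q : ℕ) ≤ (2 * T / b) ^ q * (q.factorial * Real.exp (b / (2 * T) / t)) := by
        have h1 : t⁻¹ = (2 * T / b) * (b / (2 * T) / t) := by field_simp
        calc (t⁻¹) ^ (q : ℕ) = (2 * T / b) ^ q * (b / (2 * T) / t) ^ q := by rw [← mul_pow, ← h1]
        _ ≤ _ := mul_le_mul_of_nonneg_left (aux_pow_le_fact_mul_exp (by positivity) q)
              (by positivity)
      calc (t : ℝ) ^ (-k) * t ^ (s₀ - 1) = t ^ (s₀ - 1 - (k : ℝ)) := e1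
      _ ≤ t ^ (-((q : ℕ) : ℝ)) := e2
      _ = (t⁻¹) ^ (q : ℕ) := e3
      _ ≤ _ := e4
    have hexp : Real.exp (-(b / T / t)) * Real.exp (b / (2 * T) / t) =
        Real.exp (-(b / (2 * T) / t)) := by
      rw [← Real.exp_add]
      congr 1
      field_simp
      ring
    calc ‖f (α * t) * (t : ℂ) ^ (s - 1)‖ = ‖f (α * t)‖ * t ^ (s₀ - 1) := by
          rw [norm_mul, hnorm_t t ht]
    _ ≤ (M * Real.exp (-(b / T / t)) * (‖C₂‖⁻¹ * (‖α‖ ^ (-k) * t ^ (-k)))) * t ^ (s₀ - 1) :=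
        mul_le_mul_of_nonneg_right hfz2 (Real.rpow_nonneg ht.le _)
    _ ≤ (M * Real.exp (-(b / T / t)) * (‖C₂‖⁻¹ * ((2 : ℝ) ^ k.natAbs * t ^ (-k)))) *
          t ^ (s₀ - 1) := by
        apply mul_le_mul_of_nonneg_right _ (Real.rpow_nonneg ht.le _)
        apply mul_le_mul_of_nonneg_left _ (by positivity)
        apply mul_le_mul_of_nonneg_left _ (by positivity)
        exact mul_le_mul_of_nonneg_right hαk htk0
    _ = (M * Real.exp (-(b / T / t)) * ‖C₂‖⁻¹ * (2 : ℝ) ^ k.natAbs) *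
          (t ^ (-k) * t ^ (s₀ - 1)) := by ring
    _ ≤ (M * Real.exp (-(b / T / t)) * ‖C₂‖⁻¹ * (2 : ℝ) ^ k.natAbs) *
          ((2 * T / b) ^ q * (q.factorial * Real.exp (b / (2 * T) / t))) :=
        mul_le_mul_of_nonneg_left htk (by positivity)
    _ = K₂ * T ^ (q : ℕ) * Real.exp (-(b / (2 * T) / t)) := by
        rw [hK₂def, ← hexp, show (2 * T / b) = (2 / b) * T by ring, mul_pow]
        ring
  set B₁ : ℝ := K₂ * T ^ (q : ℕ) * Real.exp (a / (2 * T)) with hB₁def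
  set B₂ : ℝ := M * p.factorial * (2 / a) ^ p * T ^ (p : ℕ) with hB₂def
  have hB₁ : 0 < B₁ := by positivity
  have hB₂ : 0 < B₂ := by positivity
  have hFmeas : AEStronglyMeasurable (fun t : ℝ => f (α * t) * (t : ℂ) ^ (s - 1))
      (volume.restrict (Set.Ioi 0)) := by
    apply ContinuousOn.aestronglyMeasurable _ measurableSet_Ioi
    apply ContinuousOn.mul
    · apply hfc.comp (Continuous.continuousOn (by continuity))
      intro t ht
      simp only [Set.mem_setOf_eq]
      exact himpos t ht
    · intro t ht
      apply ContinuousAt.continuousWithinAt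
      exact (continuousAt_cpow_const
        (Complex.ofReal_mem_slitPlane.mpr ht)).comp Complex.continuous_ofReal.continuousAt
  have hBnd : ∀ t ∈ Set.Ioi (0 : ℝ), ‖f (α * t) * (t : ℂ) ^ (s - 1)‖ ≤
      (B₁ + B₂) * Real.exp (-(a / (2 * T) * t)) := by
    intro t ht
    rw [Set.mem_Ioi] at ht
    rcases le_or_gt t 1 with h1 | h1
    · have h2 : Real.exp (-(b / (2 * T) / t)) ≤
          Real.exp (a / (2 * T)) * Real.exp (-(a / (2 * T) * t)) := by
        rw [← Real.exp_add]
        apply Real.exp_le_exp.mpr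
        have h3 : a / (2 * T) + -(a / (2 * T) * t) = a / (2 * T) * (1 - t) := by ring
        have h4 : 0 ≤ a / (2 * T) * (1 - t) := by
          apply mul_nonneg (by positivity)
          linarith only [h1]
        have h5 : (0:ℝ) ≤ b / (2 * T) / t := by positivity
        linarith only [h3, h4, h5]
      calc ‖f (α * t) * (t : ℂ) ^ (s - 1)‖ ≤ K₂ * T ^ (q : ℕ) * Real.exp (-(b / (2 * T) / t)) :=
            hFsmall t ht h1
      _ ≤ K₂ * T ^ (q : ℕ) * (Real.exp (a / (2 * T)) * Real.exp (-(a / (2 * T) * t))) :=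
          mul_le_mul_of_nonneg_left h2 (by positivity)
      _ = B₁ * Real.exp (-(a / (2 * T) * t)) := by rw [hB₁def]; ring
      _ ≤ (B₁ + B₂) * Real.exp (-(a / (2 * T) * t)) := by
          apply mul_le_mul_of_nonneg_right _ (Real.exp_nonneg _)
          linarith only [hB₂]
    · calc ‖f (α * t) * (t : ℂ) ^ (s - 1)‖ ≤ B₂ * Real.exp (-(a / (2 * T) * t)) :=
            hFlarge t h1.le
      _ ≤ (B₁ + B₂) * Real.exp (-(a / (2 * T) * t)) := by
          apply mul_le_mul_of_nonneg_right _ (Real.exp_nonneg _)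
          linarith only [hB₁]
  have hgint : IntegrableOn (fun t : ℝ => (B₁ + B₂) * Real.exp (-(a / (2 * T) * t)))
      (Set.Ioi (0:ℝ)) := by
    apply Integrable.const_mul
    simpa [neg_mul, IntegrableOn] using exp_neg_integrableOn_Ioi (0:ℝ) (show 0 < a / (2 * T) by positivity)
  have hFint : IntegrableOn (fun t : ℝ => f (α * t) * (t : ℂ) ^ (s - 1)) (Set.Ioi 0) := by
    apply Integrable.mono' hgint hFmeas
    filter_upwards [ae_restrict_mem measurableSet_Ioi] with t ht
    exact hBnd t ht
  refine ⟨hFint, ?_⟩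
  set ε : ℝ := 1 / (d₁ * T * Real.log T) with hεdef
  set X : ℝ := d₂ * T * Real.log T with hXdef
  have hd₁T : 1 ≤ d₁ * T * Real.log T := by
    calc (1:ℝ) ≤ T * Real.log T := hTlog
    _ ≤ d₁ * (T * Real.log T) := le_mul_of_one_le_left (by positivity) hd₁1
    _ = d₁ * T * Real.log T := by ring
  have hε0 : 0 < ε := by rw [hεdef]; positivity
  have hε1 : ε ≤ 1 := by
    rw [hεdef, div_le_one (by linarith only [hd₁T])]
    exact hd₁T
  have hX1 : 1 ≤ X := by
    rw [hXdef]
    calc (1:ℝ) ≤ T * Real.log T := hTlog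
    _ ≤ d₂ * (T * Real.log T) := le_mul_of_one_le_left (by positivity) hd₂1
    _ = d₂ * T * Real.log T := by ring
  have hX0 : 0 < X := lt_of_lt_of_le one_pos hX1
  have hεX : ε ≤ X := le_trans hε1 hX1
  have hint1 : IntegrableOn (fun t : ℝ => f (α * t) * (t : ℂ) ^ (s - 1)) (Set.Ioc 0 ε) :=
    hFint.mono_set Set.Ioc_subset_Ioi_self
  have hintIε : IntegrableOn (fun t : ℝ => f (α * t) * (t : ℂ) ^ (s - 1)) (Set.Ioi ε) :=
    hFint.mono_set (Set.Ioi_subset_Ioi hε0.le)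
  have hint2 : IntegrableOn (fun t : ℝ => f (α * t) * (t : ℂ) ^ (s - 1)) (Set.Ioc ε X) :=
    hintIε.mono_set Set.Ioc_subset_Ioi_self
  have hint3 : IntegrableOn (fun t : ℝ => f (α * t) * (t : ℂ) ^ (s - 1)) (Set.Ioi X) :=
    hFint.mono_set (Set.Ioi_subset_Ioi hX0.le)
  have he1 : ∫ t in Set.Ioi ε, f (α * t) * (t : ℂ) ^ (s - 1) =
      (∫ t in Set.Ioc ε X, f (α * t) * (t : ℂ) ^ (s - 1)) +
        ∫ t in Set.Ioi X, f (α * t) * (t : ℂ) ^ (s - 1) := by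
    rw [← Set.Ioc_union_Ioi_eq_Ioi hεX]
    exact setIntegral_union (Set.Ioc_disjoint_Ioi le_rfl) measurableSet_Ioi hint2 hint3
  have he2 : ∫ t in Set.Ioi (0:ℝ), f (α * t) * (t : ℂ) ^ (s - 1) =
      (∫ t in Set.Ioc 0 ε, f (α * t) * (t : ℂ) ^ (s - 1)) +
        ∫ t in Set.Ioi ε, f (α * t) * (t : ℂ) ^ (s - 1) := by
    rw [← Set.Ioc_union_Ioi_eq_Ioi hε0.le]
    exact setIntegral_union (Set.Ioc_disjoint_Ioi le_rfl) measurableSet_Ioi hint1 hintIε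
  rw [intervalIntegral.integral_of_le hεX, he2, he1,
    show ∀ A B C : ℂ, A + (B + C) - B = A + C from fun A B C => by ring]
  have hTγ : (0:ℝ) ≤ T ^ (-γ) := Real.rpow_nonneg hT0.le _
  -- small-end bound
  have hA : ‖∫ t in Set.Ioc (0:ℝ) ε, f (α * t) * (t : ℂ) ^ (s - 1)‖ ≤ K₂ * T ^ (-γ) := by
    have hptw : ∀ t ∈ Set.Ioc (0:ℝ) ε, ‖f (α * t) * (t : ℂ) ^ (s - 1)‖ ≤
        K₂ * T ^ (q : ℕ) * Real.exp (-(b / (2 * T) / ε)) := by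
      intro t ht
      obtain ⟨ht0, htε⟩ := ht
      calc ‖f (α * t) * (t : ℂ) ^ (s - 1)‖ ≤ K₂ * T ^ (q : ℕ) * Real.exp (-(b / (2 * T) / t)) :=
            hFsmall t ht0 (le_trans htε hε1)
      _ ≤ K₂ * T ^ (q : ℕ) * Real.exp (-(b / (2 * T) / ε)) := by
          apply mul_le_mul_of_nonneg_left _ (by positivity)
          apply Real.exp_le_exp.mpr
          have h7 : b / (2 * T) / ε ≤ b / (2 * T) / t :=
            div_le_div_of_nonneg_left (by positivity) ht0 htε
          linarith only [h7]
    have h8 := norm_setIntegral_le_of_norm_le_const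
      (by rw [Real.volume_Ioc]; exact ENNReal.ofReal_lt_top) hptw
    have h9 : volume.real (Set.Ioc (0:ℝ) ε) = ε := by
      rw [Measure.real, Real.volume_Ioc, ENNReal.toReal_ofReal (by linarith only [hε0])]
      ring
    rw [h9] at h8
    have h10 : Real.exp (-(b / (2 * T) / ε)) = T ^ (-(b * d₁ / 2)) := by
      have h11 : b / (2 * T) / ε = b * d₁ / 2 * Real.log T := by
        rw [hεdef]
        field_simp
      rw [h11, Real.rpow_def_of_pos hT0]
      congr 1
      ring
    calc ‖∫ t in Set.Ioc (0:ℝ) ε, f (α * t) * (t : ℂ) ^ (s - 1)‖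
        ≤ K₂ * T ^ (q : ℕ) * Real.exp (-(b / (2 * T) / ε)) * ε := h8
    _ ≤ K₂ * T ^ (q : ℕ) * Real.exp (-(b / (2 * T) / ε)) * 1 :=
        mul_le_mul_of_nonneg_left hε1 (by positivity)
    _ = K₂ * (T ^ ((q : ℕ) : ℝ) * T ^ (-(b * d₁ / 2))) := by
        rw [h10, Real.rpow_natCast]
        ring
    _ = K₂ * T ^ (((q : ℕ) : ℝ) + -(b * d₁ / 2)) := by rw [← Real.rpow_add hT0]
    _ ≤ K₂ * T ^ (-γ) := by
        apply mul_le_mul_of_nonneg_left _ hK₂.le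
        apply Real.rpow_le_rpow_of_exponent_le hT1
        have h12 : 2 * ((q : ℝ) + γ) ≤ d₁ * b := (div_le_iff₀ hb).mp (le_trans hcq hd₁)
        linarith only [h12]
  -- large-end bound
  have hC : ‖∫ t in Set.Ioi X, f (α * t) * (t : ℂ) ^ (s - 1)‖ ≤ K₁ * T ^ (-γ) := by
    have hμ : 0 < a / (2 * T) := by positivity
    have hexpint : IntegrableOn (fun t : ℝ => B₂ * Real.exp (-(a / (2 * T) * t)))
        (Set.Ioi X) := by
      apply Integrable.const_mul
      simpa [neg_mul, IntegrableOn] using exp_neg_integrableOn_Ioi X hμ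
    have h13 : ‖∫ t in Set.Ioi X, f (α * t) * (t : ℂ) ^ (s - 1)‖ ≤
        ∫ t in Set.Ioi X, B₂ * Real.exp (-(a / (2 * T) * t)) := by
      calc ‖∫ t in Set.Ioi X, f (α * t) * (t : ℂ) ^ (s - 1)‖
          ≤ ∫ t in Set.Ioi X, ‖f (α * t) * (t : ℂ) ^ (s - 1)‖ := norm_integral_le_integral_norm _
      _ ≤ ∫ t in Set.Ioi X, B₂ * Real.exp (-(a / (2 * T) * t)) := by
          apply setIntegral_mono_on hint3.norm hexpint measurableSet_Ioi
          intro t ht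
          exact hFlarge t (le_trans hX1 (le_of_lt ht))
    have h14 : ∫ t in Set.Ioi X, B₂ * Real.exp (-(a / (2 * T) * t)) =
        B₂ * (Real.exp (-(a / (2 * T) * X)) / (a / (2 * T))) := by
      rw [MeasureTheory.integral_const_mul, aux_integral_exp_tail hμ X]
    have h15 : Real.exp (-(a / (2 * T) * X)) = T ^ (-(a * d₂ / 2)) := by
      have h16 : a / (2 * T) * X = a * d₂ / 2 * Real.log T := by
        rw [hXdef]
        field_simp
      rw [h16, Real.rpow_def_of_pos hT0]
      congr 1
      ring
    have h17 : B₂ * (Real.exp (-(a / (2 * T) * X)) / (a / (2 * T))) =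
        K₁ * (T ^ (((p : ℕ) : ℝ) + 1) * T ^ (-(a * d₂ / 2))) := by
      rw [h15, hB₂def, hK₁def,
        show (T:ℝ) ^ (((p : ℕ) : ℝ) + 1) = T ^ (p : ℕ) * T from by
          rw [Real.rpow_add hT0, Real.rpow_one, Real.rpow_natCast]]
      field_simp
    calc ‖∫ t in Set.Ioi X, f (α * t) * (t : ℂ) ^ (s - 1)‖
        ≤ B₂ * (Real.exp (-(a / (2 * T) * X)) / (a / (2 * T))) := by rw [← h14]; exact h13
    _ = K₁ * T ^ ((((p : ℕ) : ℝ) + 1) + -(a * d₂ / 2)) := by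
        rw [h17, ← Real.rpow_add hT0]
    _ ≤ K₁ * T ^ (-γ) := by
        apply mul_le_mul_of_nonneg_left _ hK₁.le
        apply Real.rpow_le_rpow_of_exponent_le hT1
        have h18 : 2 * ((p : ℝ) + 1 + γ) ≤ d₂ * a := (div_le_iff₀ ha).mp (le_trans hcp hd₂)
        linarith only [h18]
  calc ‖(∫ t in Set.Ioc (0:ℝ) ε, f (α * t) * (t : ℂ) ^ (s - 1)) +
        ∫ t in Set.Ioi X, f (α * t) * (t : ℂ) ^ (s - 1)‖
      ≤ ‖∫ t in Set.Ioc (0:ℝ) ε, f (α * t) * (t : ℂ) ^ (s - 1)‖ +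
        ‖∫ t in Set.Ioi X, f (α * t) * (t : ℂ) ^ (s - 1)‖ := norm_add_le _ _
  _ ≤ K₂ * T ^ (-γ) + K₁ * T ^ (-γ) := add_le_add hA hC
  _ ≤ c * T ^ (-γ) := by
      have h19 := mul_le_mul_of_nonneg_right hcK hTγ
      linarith only [h19]
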